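/- There is an absolute constant C such that for all f, g ∈ L²(ℝ) and all λ > 0, |{ x ∈ ℝ : M_D(f,g)(x) > λ }| ≤ C · λ^{-1} · ‖f‖_{L²(ℝ)} ‖g‖_{L²(ℝ)}. In other words, M_D maps L²(ℝ) × L²(ℝ) to L^{1,∞}(ℝ). -/

import Mathlib

open MeasureTheory Set Real
open scoped ENNReal NNReal

/-- The parallelogram `P_{x,l,w}` with vertices `(x±l, x±l±w)`: its two
vertical sides have length `2w` and its other two sides are parallel to the
diagonal `D = {(t,t) : t ∈ ℝ}`. -/
def para (x l w : ℝ) : Set (ℝ × ℝ) :=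
  {p | |p.1 - x| ≤ l ∧ |p.2 - p.1| ≤ w}

/-- The diagonal bilinear maximal operator
`M_D(f,g)(x) = sup_{l,w > 0} (1/|P_{x,l,w}|) ∫_{P_{x,l,w}} |f(y) g(z)| dy dz`. -/
noncomputable def MD (f g : ℝ → ℂ) (x : ℝ) : ℝ≥0∞ :=
  ⨆ (l : ℝ) (_ : 0 < l) (w : ℝ) (_ : 0 < w),
    (∫⁻ p in para x l w, (‖f p.1 * g p.2‖₊ : ℝ≥0∞)) / volume (para x l w)

/-! ### Auxiliary lemmas -/

/-- Weak (1,1) bound for the (uncentered-radius) Hardy–Littlewood-type superlevel set,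
proved via the Vitali covering lemma. -/
theorem weak11 (h : ℝ → ℝ≥0∞) (a : ℝ≥0∞) (ha0 : a ≠ 0) (hat : a ≠ ∞) :
    volume {x : ℝ | ∃ r, 0 < r ∧
        a * ENNReal.ofReal (2 * r) < ∫⁻ z in Metric.closedBall x r, h z} ≤
      4 * (∫⁻ z, h z) / a := by
  set I := ∫⁻ z, h z with hI
  rcases eq_or_ne I ∞ with hItop | hItop
  · rw [hItop]
    rw [ENNReal.mul_top (by norm_num), ENNReal.top_div_of_ne_top hat]
    exact le_top
  set E := {x : ℝ | ∃ r, 0 < r ∧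
      a * ENNReal.ofReal (2 * r) < ∫⁻ z in Metric.closedBall x r, h z} with hE
  choose! ρ hρ0 hρ using fun x (hx : x ∈ E) => hx
  have hdiv_ne_top : I / a ≠ ∞ := (ENNReal.div_lt_top hItop ha0).ne
  have hkey : ∀ x ∈ E, ENNReal.ofReal (2 * ρ x) ≤ I / a := by
    intro x hx
    rw [ENNReal.le_div_iff_mul_le (Or.inl ha0) (Or.inl hat), mul_comm]
    exact le_trans (hρ x hx).le (setLIntegral_le_lintegral _ _)
  have hρR : ∀ x ∈ E, ρ x ≤ (I / a).toReal := by
    intro x hx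
    have h2 : 2 * ρ x ≤ (I / a).toReal :=
      (ENNReal.ofReal_le_iff_le_toReal hdiv_ne_top).1 (hkey x hx)
    have := hρ0 x hx
    linarith
  obtain ⟨u, huE, hdisj, hcov⟩ :=
    Vitali.exists_disjoint_subfamily_covering_enlargement_closedBall E id ρ
      ((I / a).toReal) hρR 4 (by norm_num)
  have hucnt : u.Countable := by
    refine hdisj.countable_of_nonempty_interior fun b hb => ?_
    have hbpos : 0 < ρ b := hρ0 b (huE hb)
    rw [interior_closedBall _ hbpos.ne']
    exact ⟨b, Metric.mem_ball_self hbpos⟩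
  have hEsub : E ⊆ ⋃ b ∈ u, Metric.closedBall b (4 * ρ b) := by
    intro x hx
    obtain ⟨b, hbu, hsub⟩ := hcov x hx
    exact mem_biUnion hbu (hsub (Metric.mem_closedBall_self (hρ0 x hx).le))
  have := hucnt.to_subtype
  calc volume E ≤ volume (⋃ b ∈ u, Metric.closedBall b (4 * ρ b)) := measure_mono hEsub
    _ ≤ ∑' b : u, volume (Metric.closedBall (b : ℝ) (4 * ρ b)) :=
        measure_biUnion_le _ hucnt _
    _ ≤ ∑' b : u, 4 * ((∫⁻ z in Metric.closedBall (b : ℝ) (ρ (b : ℝ)), h z) * a⁻¹) := by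
        refine ENNReal.tsum_le_tsum fun b => ?_
        rw [Real.volume_closedBall, show (2 : ℝ) * (4 * ρ (b : ℝ)) = 4 * (2 * ρ (b : ℝ)) by ring,
          ENNReal.ofReal_mul (by norm_num), show ENNReal.ofReal (4 : ℝ) = 4 by
            rw [show (4 : ℝ) = ((4 : ℕ) : ℝ) by norm_num, ENNReal.ofReal_natCast]; norm_num]
        gcongr
        have hmem : (b : ℝ) ∈ E := huE b.2
        have h1 : ENNReal.ofReal (2 * ρ (b : ℝ)) ≤
            (∫⁻ z in Metric.closedBall (b : ℝ) (ρ (b : ℝ)), h z) / a := by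
          rw [ENNReal.le_div_iff_mul_le (Or.inl ha0) (Or.inl hat), mul_comm]
          exact (hρ _ hmem).le
        simpa [div_eq_mul_inv] using h1
    _ = 4 * ((∑' b : u, ∫⁻ z in Metric.closedBall (b : ℝ) (ρ (b : ℝ)), h z) * a⁻¹) := by
        rw [ENNReal.tsum_mul_left, ENNReal.tsum_mul_right]
    _ ≤ 4 * (I * a⁻¹) := by
        gcongr
        have hdisj' : Pairwise (Function.onFun Disjoint fun b : u => Metric.closedBall (b : ℝ) (ρ (b : ℝ))) :=
          hdisj.subtype _ _
        rw [← lintegral_iUnion (fun b : u => measurableSet_closedBall) hdisj' h]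
        exact setLIntegral_le_lintegral _ _
    _ = 4 * I / a := by rw [div_eq_mul_inv, mul_assoc]

theorem setLIntegral_translate (v : ℝ → ℝ≥0∞) (c r t : ℝ) :
    ∫⁻ s in Metric.closedBall c r, v (s + t) = ∫⁻ s in Metric.closedBall (c + t) r, v s := by
  have hmp : MeasurePreserving (fun s : ℝ => s + t) volume volume :=
    measurePreserving_add_right volume t
  have h := hmp.setLIntegral_comp_preimage_emb (Homeomorph.addRight t).measurableEmbedding v
      (Metric.closedBall (c + t) r)
  rw [show (fun s : ℝ => s + t) ⁻¹' Metric.closedBall (c + t) r = Metric.closedBall c r by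
    ext s
    simp only [mem_preimage, Metric.mem_closedBall, Real.dist_eq,
      show s + t - (c + t) = s - c by ring]] at h
  exact h

/-- The shear `(y, t) ↦ (y, y + t)` as a measurable equivalence of `ℝ × ℝ`. -/
noncomputable def shearEquiv : (ℝ × ℝ) ≃ᵐ (ℝ × ℝ) where
  toFun q := (q.1, q.1 + q.2)
  invFun q := (q.1, q.2 - q.1)
  left_inv q := by simp
  right_inv q := by simp
  measurable_toFun := (measurable_fst.prodMk (measurable_fst.add measurable_snd)).comp
    measurable_id
  measurable_invFun := (measurable_fst.prodMk (measurable_snd.sub measurable_fst)).comp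
    measurable_id

theorem shear_measurePreserving :
    MeasurePreserving (fun q : ℝ × ℝ => (q.1, q.1 + q.2)) volume volume :=
  measurePreserving_prod_add volume volume

theorem lintegral_para (x l w : ℝ) (H : ℝ × ℝ → ℝ≥0∞) :
    ∫⁻ p in para x l w, H p =
      ∫⁻ q in Metric.closedBall x l ×ˢ Metric.closedBall (0 : ℝ) w, H (q.1, q.1 + q.2) := by
  have hemb : MeasurableEmbedding (fun q : ℝ × ℝ => (q.1, q.1 + q.2)) :=
    shearEquiv.measurableEmbedding
  have h := shear_measurePreserving.setLIntegral_comp_preimage_emb hemb H (para x l w)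
  rw [show (fun q : ℝ × ℝ => (q.1, q.1 + q.2)) ⁻¹' para x l w =
      Metric.closedBall x l ×ˢ Metric.closedBall (0 : ℝ) w by
    ext q
    simp only [mem_preimage, para, mem_setOf_eq, mem_prod, Metric.mem_closedBall, Real.dist_eq,
      add_sub_cancel_left, sub_zero]] at h
  exact h.symm

theorem volume_para (x : ℝ) {l w : ℝ} (hl : 0 < l) (hw : 0 < w) :
    volume (para x l w) = ENNReal.ofReal (2 * l) * ENNReal.ofReal (2 * w) := by
  have h1 : volume (para x l w) = ∫⁻ _ in para x l w, 1 := (setLIntegral_one _).symm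
  rw [h1, lintegral_para x l w (fun _ => 1), setLIntegral_one,
    Measure.volume_eq_prod ℝ ℝ, Measure.prod_prod, Real.volume_closedBall, Real.volume_closedBall]

/-- Zero a.e. function kills `MD` (left factor). -/
theorem MD_zero_left {f : ℝ → ℂ} (g : ℝ → ℂ) (hf0 : f =ᵐ[volume] 0) (x : ℝ) :
    MD f g x = 0 := by
  have hnull : volume {y : ℝ | f y ≠ 0} = 0 := by
    exact ae_iff.1 hf0
  obtain ⟨N, hsub, hNm, hN0⟩ := exists_measurable_superset_of_null hnull
  have hprod : (volume : Measure (ℝ × ℝ)) (N ×ˢ (univ : Set ℝ)) = 0 := by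
    rw [Measure.volume_eq_prod ℝ ℝ, Measure.prod_prod, hN0, zero_mul]
  have hae : ∀ᵐ p : ℝ × ℝ, f p.1 = 0 := by
    rw [ae_iff]
    refine measure_mono_null (fun p hp => ?_) hprod
    exact ⟨hsub hp, mem_univ _⟩
  have hzero : ∀ l w : ℝ,
      (∫⁻ p in para x l w, (‖f p.1 * g p.2‖₊ : ℝ≥0∞)) = 0 := by
    intro l w
    have : ∀ᵐ p : ℝ × ℝ ∂(volume.restrict (para x l w)),
        (‖f p.1 * g p.2‖₊ : ℝ≥0∞) = 0 := by
      filter_upwards [ae_restrict_of_ae hae] with p hp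
      simp [hp]
    rw [lintegral_congr_ae this, lintegral_zero]
  rw [MD]
  refine le_antisymm ?_ zero_le
  refine iSup_le fun l => iSup_le fun _ => iSup_le fun w => iSup_le fun _ => ?_
  rw [hzero l w, ENNReal.zero_div]

/-- Zero a.e. function kills `MD` (right factor). -/
theorem MD_zero_right (f : ℝ → ℂ) {g : ℝ → ℂ} (hg0 : g =ᵐ[volume] 0) (x : ℝ) :
    MD f g x = 0 := by
  have hnull : volume {y : ℝ | g y ≠ 0} = 0 := by
    exact ae_iff.1 hg0
  obtain ⟨N, hsub, hNm, hN0⟩ := exists_measurable_superset_of_null hnull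
  have hprod : (volume : Measure (ℝ × ℝ)) ((univ : Set ℝ) ×ˢ N) = 0 := by
    rw [Measure.volume_eq_prod ℝ ℝ, Measure.prod_prod, hN0, mul_zero]
  have hae : ∀ᵐ p : ℝ × ℝ, g p.2 = 0 := by
    rw [ae_iff]
    refine measure_mono_null (fun p hp => ?_) hprod
    exact ⟨mem_univ _, hsub hp⟩
  have hzero : ∀ l w : ℝ,
      (∫⁻ p in para x l w, (‖f p.1 * g p.2‖₊ : ℝ≥0∞)) = 0 := by
    intro l w
    have : ∀ᵐ p : ℝ × ℝ ∂(volume.restrict (para x l w)),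
        (‖f p.1 * g p.2‖₊ : ℝ≥0∞) = 0 := by
      filter_upwards [ae_restrict_of_ae hae] with p hp
      simp [hp]
    rw [lintegral_congr_ae this, lintegral_zero]
  rw [MD]
  refine le_antisymm ?_ zero_le
  refine iSup_le fun l => iSup_le fun _ => iSup_le fun w => iSup_le fun _ => ?_
  rw [hzero l w, ENNReal.zero_div]

/-- The key Cauchy–Schwarz estimate for the parallelogram average. -/
theorem key_estimate {f g : ℝ → ℂ} (hf : AEStronglyMeasurable f volume)
    (hg : AEStronglyMeasurable g volume) (x : ℝ) {l w : ℝ} (hl : 0 < l) (hw : 0 < w) :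
    (∫⁻ p in para x l w, (‖f p.1 * g p.2‖₊ : ℝ≥0∞)) ^ (2 : ℝ) ≤
      (ENNReal.ofReal (2 * w) * ∫⁻ y in Metric.closedBall x l, (‖f y‖₊ : ℝ≥0∞) ^ (2 : ℝ)) *
      (ENNReal.ofReal (2 * min l w) *
        ∫⁻ z in Metric.closedBall x (l + w), (‖g z‖₊ : ℝ≥0∞) ^ (2 : ℝ)) := by
  set B1 := Metric.closedBall x l
  set B2 := Metric.closedBall (0 : ℝ) w
  set F := ∫⁻ y in B1, (‖f y‖₊ : ℝ≥0∞) ^ (2 : ℝ) with hF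
  set G := ∫⁻ z in Metric.closedBall x (l + w), (‖g z‖₊ : ℝ≥0∞) ^ (2 : ℝ) with hG
  set u : ℝ × ℝ → ℝ≥0∞ := fun q => (‖f q.1‖₊ : ℝ≥0∞) with hu_def
  set v : ℝ × ℝ → ℝ≥0∞ := fun q => (‖g (q.1 + q.2)‖₊ : ℝ≥0∞) with hv_def
  -- the product measure
  have hprodeq : (volume.restrict B1).prod (volume.restrict B2) =
      (volume : Measure (ℝ × ℝ)).restrict (B1 ×ˢ B2) := by
    rw [Measure.prod_restrict, ← Measure.volume_eq_prod ℝ ℝ]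
  have hle : (volume.restrict B1).prod (volume.restrict B2) ≤ (volume : Measure (ℝ × ℝ)) := by
    rw [hprodeq]; exact Measure.restrict_le_self
  have hqfst : Measure.QuasiMeasurePreserving (Prod.fst : ℝ × ℝ → ℝ) volume volume :=
    Measure.quasiMeasurePreserving_fst
  have hqsnd : Measure.QuasiMeasurePreserving (Prod.snd : ℝ × ℝ → ℝ) volume volume :=
    Measure.quasiMeasurePreserving_snd
  have hqadd : Measure.QuasiMeasurePreserving (fun q : ℝ × ℝ => q.1 + q.2) volume volume :=
    hqsnd.comp shear_measurePreserving.quasiMeasurePreserving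
  have huA : AEMeasurable u ((volume.restrict B1).prod (volume.restrict B2)) :=
    ((hf.enorm).comp_quasiMeasurePreserving hqfst).mono_measure hle
  have hvA : AEMeasurable v ((volume.restrict B1).prod (volume.restrict B2)) :=
    ((hg.enorm).comp_quasiMeasurePreserving hqadd).mono_measure hle
  -- step 1: change of variables
  have step1 : (∫⁻ p in para x l w, (‖f p.1 * g p.2‖₊ : ℝ≥0∞)) =
      ∫⁻ q, u q * v q ∂((volume.restrict B1).prod (volume.restrict B2)) := by
    rw [lintegral_para, hprodeq]
    refine lintegral_congr fun q => ?_
    simp [hu_def, hv_def, nnnorm_mul]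
  -- Hölder's inequality with p = q = 2
  have hconj : Real.HolderConjugate 2 2 := Real.HolderConjugate.two_two
  have holder := ENNReal.lintegral_mul_le_Lp_mul_Lq
    ((volume.restrict B1).prod (volume.restrict B2)) hconj huA hvA
  simp only [Pi.mul_apply] at holder
  -- first factor
  have hX : (∫⁻ q, u q ^ (2 : ℝ) ∂((volume.restrict B1).prod (volume.restrict B2))) =
      ENNReal.ofReal (2 * w) * F := by
    rw [lintegral_prod _ (huA.pow_const _)]
    have h2 : (∫⁻ y, ∫⁻ t, u (y, t) ^ (2 : ℝ) ∂(volume.restrict B2) ∂(volume.restrict B1))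
        = ∫⁻ y, (‖f y‖₊ : ℝ≥0∞) ^ (2 : ℝ) * ENNReal.ofReal (2 * w) ∂(volume.restrict B1) := by
      refine lintegral_congr fun y => ?_
      simp only [hu_def]
      rw [lintegral_const, Measure.restrict_apply_univ, Real.volume_closedBall]
    rw [h2, lintegral_mul_const' _ _ ENNReal.ofReal_ne_top, ← hF, mul_comm]
  -- second factor
  have hY : (∫⁻ q, v q ^ (2 : ℝ) ∂((volume.restrict B1).prod (volume.restrict B2))) ≤
      ENNReal.ofReal (2 * min l w) * G := by
    rcases le_total l w with hlw | hwl
    · rw [min_eq_left hlw, lintegral_prod _ (hvA.pow_const _)]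
      have hinner : ∀ y ∈ B1,
          (∫⁻ t, v (y, t) ^ (2 : ℝ) ∂(volume.restrict B2)) ≤ G := by
        intro y hy
        simp only [hv_def]
        have ht : (∫⁻ t in Metric.closedBall (0 : ℝ) w, (‖g (y + t)‖₊ : ℝ≥0∞) ^ (2 : ℝ)) =
            ∫⁻ s in Metric.closedBall (0 + y) w, (‖g s‖₊ : ℝ≥0∞) ^ (2 : ℝ) := by
          rw [← setLIntegral_translate (fun z => (‖g z‖₊ : ℝ≥0∞) ^ (2 : ℝ)) 0 w y]
          exact lintegral_congr fun t => by rw [add_comm]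
        rw [show (volume.restrict B2) = volume.restrict (Metric.closedBall (0 : ℝ) w) from rfl,
          ht, hG]
        refine lintegral_mono' (Measure.restrict_mono ?_ le_rfl) le_rfl
        rw [zero_add]
        refine Metric.closedBall_subset_closedBall' ?_
        have hyx : dist y x ≤ l := by simpa [B1, Metric.mem_closedBall] using hy
        linarith
      calc (∫⁻ y, ∫⁻ t, v (y, t) ^ (2 : ℝ) ∂(volume.restrict B2) ∂(volume.restrict B1))
          ≤ ∫⁻ _ in B1, G := setLIntegral_mono' measurableSet_closedBall hinner
        _ = G * volume B1 := setLIntegral_const _ _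
        _ = ENNReal.ofReal (2 * l) * G := by
            rw [show volume B1 = ENNReal.ofReal (2 * l) from Real.volume_closedBall x l, mul_comm]
    · rw [min_eq_right hwl, lintegral_prod_symm _ (hvA.pow_const _)]
      have hinner : ∀ t ∈ B2,
          (∫⁻ y, v (y, t) ^ (2 : ℝ) ∂(volume.restrict B1)) ≤ G := by
        intro t ht
        simp only [hv_def]
        rw [show (volume.restrict B1) = volume.restrict (Metric.closedBall x l) from rfl,
          setLIntegral_translate (fun z => (‖g z‖₊ : ℝ≥0∞) ^ (2 : ℝ)) x l t, hG]
        refine lintegral_mono' (Measure.restrict_mono ?_ le_rfl) le_rfl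
        refine Metric.closedBall_subset_closedBall' ?_
        have htw : dist t 0 ≤ w := by simpa [B2, Metric.mem_closedBall] using ht
        have : dist (x + t) x ≤ w := by
          rw [Real.dist_eq, add_sub_cancel_left]
          simpa [Real.dist_eq] using htw
        linarith
      calc (∫⁻ t, ∫⁻ y, v (y, t) ^ (2 : ℝ) ∂(volume.restrict B1) ∂(volume.restrict B2))
          ≤ ∫⁻ _ in B2, G := setLIntegral_mono' measurableSet_closedBall hinner
        _ = G * volume B2 := setLIntegral_const _ _
        _ = ENNReal.ofReal (2 * w) * G := by
            rw [show volume B2 = ENNReal.ofReal (2 * w) from Real.volume_closedBall 0 w, mul_comm]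
  -- combine
  calc (∫⁻ p in para x l w, (‖f p.1 * g p.2‖₊ : ℝ≥0∞)) ^ (2 : ℝ)
      = (∫⁻ q, u q * v q ∂((volume.restrict B1).prod (volume.restrict B2))) ^ (2 : ℝ) := by
        rw [step1]
    _ ≤ ((∫⁻ q, u q ^ (2 : ℝ) ∂((volume.restrict B1).prod (volume.restrict B2))) ^ (1/2 : ℝ) *
          (∫⁻ q, v q ^ (2 : ℝ) ∂((volume.restrict B1).prod (volume.restrict B2))) ^ (1/2 : ℝ))
            ^ (2 : ℝ) :=
        ENNReal.rpow_le_rpow holder (by norm_num)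
    _ = (∫⁻ q, u q ^ (2 : ℝ) ∂((volume.restrict B1).prod (volume.restrict B2))) *
          (∫⁻ q, v q ^ (2 : ℝ) ∂((volume.restrict B1).prod (volume.restrict B2))) := by
        rw [← ENNReal.mul_rpow_of_nonneg _ _ (by norm_num : (0:ℝ) ≤ 1/2), ← ENNReal.rpow_mul]
        norm_num
    _ ≤ (ENNReal.ofReal (2 * w) * F) * (ENNReal.ofReal (2 * min l w) * G) := by
        rw [hX]
        exact mul_le_mul_right hY _

/-- The diagonal bilinear maximal operator `M_D` maps `L²(ℝ) × L²(ℝ)` to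
`L^{1,∞}(ℝ)`. -/
theorem MD_weak_type :
    ∃ C : ℝ, 0 < C ∧
      ∀ f g : ℝ → ℂ, MemLp f 2 volume → MemLp g 2 volume →
        ∀ lam : ℝ, 0 < lam →
          volume {x : ℝ | ENNReal.ofReal lam < MD f g x} ≤
            ENNReal.ofReal (C / lam) *
              (eLpNorm f 2 volume * eLpNorm g 2 volume) := by
  refine ⟨16, by norm_num, ?_⟩
  intro f g hf hg lam hlam
  set If := ∫⁻ y, (‖f y‖₊ : ℝ≥0∞) ^ (2 : ℝ) with hIf
  set Ig := ∫⁻ y, (‖g y‖₊ : ℝ≥0∞) ^ (2 : ℝ) with hIg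
  have hsf : eLpNorm f 2 volume = If ^ (1/2 : ℝ) := by
    rw [eLpNorm_eq_lintegral_rpow_enorm_toReal (by norm_num) (by norm_num)]
    norm_num [hIf, enorm_eq_nnnorm]
  have hsg : eLpNorm g 2 volume = Ig ^ (1/2 : ℝ) := by
    rw [eLpNorm_eq_lintegral_rpow_enorm_toReal (by norm_num) (by norm_num)]
    norm_num [hIg, enorm_eq_nnnorm]
  -- degenerate case: f vanishes a.e.
  rcases eq_or_ne If 0 with hIf0 | hIf0
  · have hmeas : AEMeasurable (fun y => (‖f y‖₊ : ℝ≥0∞) ^ (2 : ℝ)) volume :=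
      hf.1.enorm.pow_const _
    have hf0 : f =ᵐ[volume] 0 := by
      filter_upwards [(lintegral_eq_zero_iff' hmeas).1 hIf0] with y hy
      have : (‖f y‖₊ : ℝ≥0∞) = 0 := by
        by_contra hne
        simp only [Pi.zero_apply] at hy
        rw [ENNReal.rpow_eq_zero_iff] at hy
        rcases hy with ⟨h1, _⟩ | ⟨h1, h2⟩
        · exact hne h1
        · norm_num at h2
      simpa using this
    have hset : {x : ℝ | ENNReal.ofReal lam < MD f g x} = ∅ := by
      refine eq_empty_iff_forall_notMem.2 fun x hx => ?_
      rw [mem_setOf_eq, MD_zero_left g hf0 x] at hx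
      exact ENNReal.not_lt_zero hx
    rw [hset, measure_empty]
    exact zero_le
  -- degenerate case: g vanishes a.e.
  rcases eq_or_ne Ig 0 with hIg0 | hIg0
  · have hmeas : AEMeasurable (fun y => (‖g y‖₊ : ℝ≥0∞) ^ (2 : ℝ)) volume :=
      hg.1.enorm.pow_const _
    have hg0 : g =ᵐ[volume] 0 := by
      filter_upwards [(lintegral_eq_zero_iff' hmeas).1 hIg0] with y hy
      have : (‖g y‖₊ : ℝ≥0∞) = 0 := by
        by_contra hne
        simp only [Pi.zero_apply] at hy
        rw [ENNReal.rpow_eq_zero_iff] at hy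
        rcases hy with ⟨h1, _⟩ | ⟨h1, h2⟩
        · exact hne h1
        · norm_num at h2
      simpa using this
    have hset : {x : ℝ | ENNReal.ofReal lam < MD f g x} = ∅ := by
      refine eq_empty_iff_forall_notMem.2 fun x hx => ?_
      rw [mem_setOf_eq, MD_zero_right f hg0 x] at hx
      exact ENNReal.not_lt_zero hx
    rw [hset, measure_empty]
    exact zero_le
  -- finiteness
  have hIft : If ≠ ∞ := by
    intro h
    have h2 := hf.2
    rw [hsf, h, ENNReal.top_rpow_of_pos (by norm_num)] at h2
    exact (lt_irrefl _ h2).elim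
  have hIgt : Ig ≠ ∞ := by
    intro h
    have h2 := hg.2
    rw [hsg, h, ENNReal.top_rpow_of_pos (by norm_num)] at h2
    exact (lt_irrefl _ h2).elim
  -- `ℝ≥0`-valued representatives
  have hsfne : If ^ (1/2 : ℝ) ≠ ∞ := ENNReal.rpow_ne_top_of_nonneg (by norm_num) hIft
  have hsgne : Ig ^ (1/2 : ℝ) ≠ ∞ := ENNReal.rpow_ne_top_of_nonneg (by norm_num) hIgt
  obtain ⟨sf, hsf'⟩ : ∃ s : ℝ≥0, If ^ (1/2 : ℝ) = (s : ℝ≥0∞) :=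
    ⟨(If ^ (1/2 : ℝ)).toNNReal, (ENNReal.coe_toNNReal hsfne).symm⟩
  obtain ⟨sg, hsg'⟩ : ∃ s : ℝ≥0, Ig ^ (1/2 : ℝ) = (s : ℝ≥0∞) :=
    ⟨(Ig ^ (1/2 : ℝ)).toNNReal, (ENNReal.coe_toNNReal hsgne).symm⟩
  have hsf0 : sf ≠ 0 := by
    intro h
    rw [h, ENNReal.coe_zero, ENNReal.rpow_eq_zero_iff] at hsf'
    rcases hsf' with ⟨h1, _⟩ | ⟨_, h2⟩
    · exact hIf0 h1
    · norm_num at h2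
  have hsg0 : sg ≠ 0 := by
    intro h
    rw [h, ENNReal.coe_zero, ENNReal.rpow_eq_zero_iff] at hsg'
    rcases hsg' with ⟨h1, _⟩ | ⟨_, h2⟩
    · exact hIg0 h1
    · norm_num at h2
  have hIfc : If = ((sf * sf : ℝ≥0) : ℝ≥0∞) := by
    rw [ENNReal.coe_mul, ← hsf', ← ENNReal.rpow_add _ _ hIf0 hIft]
    norm_num
  have hIgc : Ig = ((sg * sg : ℝ≥0) : ℝ≥0∞) := by
    rw [ENNReal.coe_mul, ← hsg', ← ENNReal.rpow_add _ _ hIg0 hIgt]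
    norm_num
  set lam' : ℝ≥0 := lam.toNNReal with hlam'
  have hlam0 : lam' ≠ 0 := (Real.toNNReal_pos.2 hlam).ne'
  have hT : ENNReal.ofReal lam = (lam' : ℝ≥0∞) := rfl
  set βf : ℝ≥0 := lam' * sf / (2 * sg) with hβf
  set βg : ℝ≥0 := lam' * sg / (2 * sf) with hβg
  have hβf0 : βf ≠ 0 := div_ne_zero (mul_ne_zero hlam0 hsf0) (mul_ne_zero two_ne_zero hsg0)
  have hβg0 : βg ≠ 0 := div_ne_zero (mul_ne_zero hlam0 hsg0) (mul_ne_zero two_ne_zero hsf0)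
  have hββ : βf * βg = lam' * lam' / 4 := by
    rw [hβf, hβg]
    field_simp
    ring
  set Ef := {x : ℝ | ∃ r, 0 < r ∧ (βf : ℝ≥0∞) * ENNReal.ofReal (2 * r) <
    ∫⁻ z in Metric.closedBall x r, (‖f z‖₊ : ℝ≥0∞) ^ (2 : ℝ)} with hEf
  set Eg := {x : ℝ | ∃ r, 0 < r ∧ (βg : ℝ≥0∞) * ENNReal.ofReal (2 * r) <
    ∫⁻ z in Metric.closedBall x r, (‖g z‖₊ : ℝ≥0∞) ^ (2 : ℝ)} with hEg
  -- the superlevel set of `MD` is contained in `Ef ∪ Eg`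
  have hsub : {x : ℝ | ENNReal.ofReal lam < MD f g x} ⊆ Ef ∪ Eg := by
    intro x hx
    simp only [mem_setOf_eq, MD, lt_iSup_iff] at hx
    obtain ⟨l, hl, w, hw, hx⟩ := hx
    by_contra hcon
    simp only [hEf, hEg, mem_union, mem_setOf_eq, not_or, not_exists, not_and, not_lt] at hcon
    obtain ⟨hcf, hcg⟩ := hcon
    have hV : volume (para x l w) = ENNReal.ofReal (2 * l) * ENNReal.ofReal (2 * w) :=
      volume_para x hl hw
    have hTV : ENNReal.ofReal lam * volume (para x l w) <
        ∫⁻ p in para x l w, (‖f p.1 * g p.2‖₊ : ℝ≥0∞) := ENNReal.mul_lt_of_lt_div hx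
    have hkey := key_estimate hf.1 hg.1 x hl hw
    set P := ENNReal.ofReal (2 * l) with hP
    set Q := ENNReal.ofReal (2 * w) with hQ
    set Mn := ENNReal.ofReal (2 * min l w) with hMn
    set W := ENNReal.ofReal (2 * (l + w)) with hW
    have hFb : (∫⁻ y in Metric.closedBall x l, (‖f y‖₊ : ℝ≥0∞) ^ (2 : ℝ)) ≤
        (βf : ℝ≥0∞) * P := hcf l hl
    have hGb : (∫⁻ z in Metric.closedBall x (l + w), (‖g z‖₊ : ℝ≥0∞) ^ (2 : ℝ)) ≤
        (βg : ℝ≥0∞) * W := hcg (l + w) (by linarith)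
    have hsq : ∀ z : ℝ≥0∞, z ^ (2 : ℝ) = z * z := fun z => by rw [ENNReal.rpow_two, sq]
    have hMnW : Mn * W ≤ 2 * (P * Q) := by
      rw [hMn, hW, hP, hQ, ← ENNReal.ofReal_mul (by positivity),
        ← ENNReal.ofReal_mul (by positivity),
        show (2 : ℝ≥0∞) = ENNReal.ofReal 2 by norm_num,
        ← ENNReal.ofReal_mul (by norm_num)]
      apply ENNReal.ofReal_le_ofReal
      rcases le_total l w with h | h
      · rw [min_eq_left h]; nlinarith
      · rw [min_eq_right h]; nlinarith
    have hPQ0 : (P * Q) * (P * Q) ≠ 0 := by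
      have hP0 : P ≠ 0 := by
        rw [hP]; simp only [ne_eq, ENNReal.ofReal_eq_zero, not_le]; linarith
      have hQ0 : Q ≠ 0 := by
        rw [hQ]; simp only [ne_eq, ENNReal.ofReal_eq_zero, not_le]; linarith
      exact mul_ne_zero (mul_ne_zero hP0 hQ0) (mul_ne_zero hP0 hQ0)
    have hPQt : (P * Q) * (P * Q) ≠ ∞ := by
      rw [hP, hQ]
      exact ENNReal.mul_ne_top (ENNReal.mul_ne_top ENNReal.ofReal_ne_top ENNReal.ofReal_ne_top)
        (ENNReal.mul_ne_top ENNReal.ofReal_ne_top ENNReal.ofReal_ne_top)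
    have final : ((lam' * lam' : ℝ≥0) : ℝ≥0∞) * ((P * Q) * (P * Q)) ≤
        ((lam' * lam' / 2 : ℝ≥0) : ℝ≥0∞) * ((P * Q) * (P * Q)) := by
      calc ((lam' * lam' : ℝ≥0) : ℝ≥0∞) * ((P * Q) * (P * Q))
          = ((lam' : ℝ≥0∞) * (P * Q)) * ((lam' : ℝ≥0∞) * (P * Q)) := by
            rw [ENNReal.coe_mul]; ring
        _ = ((ENNReal.ofReal lam * (P * Q)) ^ (2 : ℝ)) := by rw [hsq, hT]
        _ ≤ (∫⁻ p in para x l w, (‖f p.1 * g p.2‖₊ : ℝ≥0∞)) ^ (2 : ℝ) := by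
            refine ENNReal.rpow_le_rpow ?_ (by norm_num)
            rw [hV] at hTV
            exact hTV.le
        _ ≤ (Q * ∫⁻ y in Metric.closedBall x l, (‖f y‖₊ : ℝ≥0∞) ^ (2 : ℝ)) *
              (Mn * ∫⁻ z in Metric.closedBall x (l + w), (‖g z‖₊ : ℝ≥0∞) ^ (2 : ℝ)) := hkey
        _ ≤ (Q * ((βf : ℝ≥0∞) * P)) * (Mn * ((βg : ℝ≥0∞) * W)) := by gcongr
        _ = ((βf : ℝ≥0∞) * (βg : ℝ≥0∞)) * ((Q * P) * (Mn * W)) := by ring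
        _ ≤ ((βf : ℝ≥0∞) * (βg : ℝ≥0∞)) * ((Q * P) * (2 * (P * Q))) := by gcongr
        _ = (((βf * βg : ℝ≥0)) : ℝ≥0∞) * 2 * ((P * Q) * (P * Q)) := by
            rw [ENNReal.coe_mul]; ring
        _ = ((lam' * lam' / 2 : ℝ≥0) : ℝ≥0∞) * ((P * Q) * (P * Q)) := by
            rw [hββ, show ((lam' * lam' / 2 : ℝ≥0)) = (lam' * lam' / 4) * 2 by
              field_simp; ring]
            rw [ENNReal.coe_mul, ENNReal.coe_ofNat]
    have hle' : (lam' * lam' : ℝ≥0) ≤ lam' * lam' / 2 := by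
      have := (ENNReal.mul_le_mul_iff_left hPQ0 hPQt).1 final
      exact_mod_cast this
    have hhalf : lam' * lam' / 2 < lam' * lam' :=
      NNReal.half_lt_self (mul_ne_zero hlam0 hlam0)
    exact absurd hle' (not_le.2 hhalf)
  -- apply the weak (1,1) bound to each piece
  have hwf := weak11 (fun z => (‖f z‖₊ : ℝ≥0∞) ^ (2 : ℝ)) (βf : ℝ≥0∞)
    (by exact_mod_cast hβf0) ENNReal.coe_ne_top
  have hwg := weak11 (fun z => (‖g z‖₊ : ℝ≥0∞) ^ (2 : ℝ)) (βg : ℝ≥0∞)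
    (by exact_mod_cast hβg0) ENNReal.coe_ne_top
  have hEfb : volume Ef ≤ ((8 * (sf * sg) / lam' : ℝ≥0) : ℝ≥0∞) := by
    refine le_trans hwf ?_
    rw [show (∫⁻ z, (fun z => (‖f z‖₊ : ℝ≥0∞) ^ (2 : ℝ)) z) = If from rfl, hIfc,
      show (4 : ℝ≥0∞) = ((4 : ℝ≥0) : ℝ≥0∞) by norm_num, ← ENNReal.coe_mul,
      ← ENNReal.coe_div hβf0]
    refine ENNReal.coe_le_coe.2 (le_of_eq ?_)
    rw [hβf]
    field_simp
    ring
  have hEgb : volume Eg ≤ ((8 * (sf * sg) / lam' : ℝ≥0) : ℝ≥0∞) := by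
    refine le_trans hwg ?_
    rw [show (∫⁻ z, (fun z => (‖g z‖₊ : ℝ≥0∞) ^ (2 : ℝ)) z) = Ig from rfl, hIgc,
      show (4 : ℝ≥0∞) = ((4 : ℝ≥0) : ℝ≥0∞) by norm_num, ← ENNReal.coe_mul,
      ← ENNReal.coe_div hβg0]
    refine ENNReal.coe_le_coe.2 (le_of_eq ?_)
    rw [hβg]
    field_simp
    ring
  calc volume {x : ℝ | ENNReal.ofReal lam < MD f g x}
      ≤ volume (Ef ∪ Eg) := measure_mono hsub
    _ ≤ volume Ef + volume Eg := measure_union_le _ _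
    _ ≤ ((8 * (sf * sg) / lam' : ℝ≥0) : ℝ≥0∞) + ((8 * (sf * sg) / lam' : ℝ≥0) : ℝ≥0∞) :=
        add_le_add hEfb hEgb
    _ = ((16 * (sf * sg) / lam' : ℝ≥0) : ℝ≥0∞) := by
        rw [← ENNReal.coe_add]
        congr 1
        rw [← add_div]
        congr 1
        ring
    _ ≤ ENNReal.ofReal (16 / lam) * (eLpNorm f 2 volume * eLpNorm g 2 volume) := by
        rw [hsf, hsg, hsf', hsg', ← ENNReal.coe_mul,
          show ENNReal.ofReal (16 / lam) = ((16 / lam).toNNReal : ℝ≥0∞) from rfl,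
          ← ENNReal.coe_mul]
        refine ENNReal.coe_le_coe.2 (le_of_eq ?_)
        rw [Real.toNNReal_div (by norm_num), Real.toNNReal_ofNat 16]
        rw [div_mul_eq_mul_div]
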